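/- arXiv:1306.4518 — 4 statements merged into one kernel-verified Lean document; each statement's English description precedes it below -/
import Mathlib

section
/- There is exactly one family of complex structure constants Λ^s_{ab} (a,b,s ∈ {0,1,2,3}) satisfying: (i) Λ^s_{ij} = Λ^s_{ji} for all s ∈ {0,1,2,3} and all i,j ∈ {1,2,3}; (ii) Λ^s_{i0} − Λ^s_{0i} = λ if s = i and = 0 otherwise, for all i ∈ {1,2,3} and s ∈ {0,1,2,3}; (iii) (centrality of the metric) η_q·Λ^p_{qr} + η_p·Λ^q_{pr} = 0 for all p,q,r ∈ {0,1,2,3}. The unique solution is Λ^0_{ii} = −λc² and Λ^i_{0i} = −λ for each i ∈ {1,2,3}, with all other components equal to zero. -/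
/-- Minkowski metric diagonal coefficients: `η 0 = c²`, `η i = -1` for `i ∈ {1,2,3}`. -/
noncomputable def minkEta (c : ℝ) : Fin 4 → ℂ :=
  fun a => if a = 0 then (c : ℂ)^2 else -1

/-- The explicit solution: `Λ⁰ᵢᵢ = -λc²`, `Λⁱ₀ᵢ = -λ` for `i ∈ {1,2,3}`, all else zero. -/
noncomputable def lamSol (c : ℝ) (lam : ℂ) : Fin 4 → Fin 4 → Fin 4 → ℂ :=
  fun s a b =>
    if s = 0 ∧ a = b ∧ a ≠ 0 then -lam * (c : ℂ)^2
    else if a = 0 ∧ b = s ∧ s ≠ 0 then -lam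
    else 0

/-- The structure-constant conditions (i), (ii), (iii). -/
def lamConds (c : ℝ) (lam : ℂ) (Λ : Fin 4 → Fin 4 → Fin 4 → ℂ) : Prop :=
  (∀ s : Fin 4, ∀ i ∈ ({1,2,3} : Finset (Fin 4)), ∀ j ∈ ({1,2,3} : Finset (Fin 4)),
      Λ s i j = Λ s j i) ∧
  (∀ i ∈ ({1,2,3} : Finset (Fin 4)), ∀ s : Fin 4,
      Λ s i 0 - Λ s 0 i = if s = i then lam else 0) ∧
  (∀ p q r : Fin 4, minkEta c q * Λ p q r + minkEta c p * Λ q p r = 0)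

set_option maxHeartbeats 2000000 in
theorem unique_central_calculus (c : ℝ) (hc : 0 < c) (lam : ℂ) :
    lamConds c lam (lamSol c lam) ∧
      ∀ Λ : Fin 4 → Fin 4 → Fin 4 → ℂ, lamConds c lam Λ → Λ = lamSol c lam := by
  have hc2 : ((c : ℂ))^2 ≠ 0 :=
    pow_ne_zero 2 (Complex.ofReal_ne_zero.mpr hc.ne')
  constructor
  · refine ⟨?_, ?_, ?_⟩
    · intro s i hi j hj
      fin_cases s <;> fin_cases hi <;> fin_cases hj <;>
        simp (config := { decide := true }) [lamSol]
    · intro i hi s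
      fin_cases hi <;> fin_cases s <;>
        simp (config := { decide := true }) [lamSol]
    · intro p q r
      fin_cases p <;> fin_cases q <;> fin_cases r <;>
        simp (config := { decide := true }) [lamSol, minkEta] <;> ring
  · rintro Λ ⟨h1, h2, h3⟩
    have hmem : ∀ i : Fin 4, i ≠ 0 → i ∈ ({1,2,3} : Finset (Fin 4)) := by decide
    have hηs : ∀ i : Fin 4, i ≠ 0 → minkEta c i = -1 := fun i hi => if_neg hi
    have hη0 : minkEta c 0 = (c:ℂ)^2 := if_pos rfl
    have e3 : ∀ p q r : Fin 4, p ≠ 0 → q ≠ 0 →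
        (-1) * Λ p q r + (-1) * Λ q p r = 0 := by
      intro p q r hp hq; have := h3 p q r; rwa [hηs p hp, hηs q hq] at this
    have e30 : ∀ p r : Fin 4, p ≠ 0 →
        (c:ℂ)^2 * Λ p 0 r + (-1) * Λ 0 p r = 0 := by
      intro p r hp; have := h3 p 0 r; rwa [hηs p hp, hη0] at this
    -- Λ p p r = 0
    have hA : ∀ p r : Fin 4, Λ p p r = 0 := by
      intro p r
      have h := h3 p p r
      have h' : minkEta c p * (Λ p p r + Λ p p r) = 0 := by linear_combination h
      have hne : minkEta c p ≠ 0 := by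
        unfold minkEta; split
        · exact hc2
        · norm_num
      rcases mul_eq_zero.mp h' with h'' | h''
      · exact absurd h'' hne
      · linear_combination h'' / 2
    -- Λ i 0 i = -lam
    have hB : ∀ i : Fin 4, i ≠ 0 → Λ i 0 i = -lam := by
      intro i hi
      have h := h2 i (hmem i hi) i
      rw [if_pos rfl] at h
      linear_combination hA i 0 - h
    -- Λ 0 i i = -(lam * c²)
    have hC : ∀ i : Fin 4, i ≠ 0 → Λ 0 i i = -(lam * (c:ℂ)^2) := by
      intro i hi
      have h := h3 0 i i
      rw [hηs i hi, hη0] at h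
      linear_combination -h + (c:ℂ)^2 * hB i hi
    -- Λ 0 i 0 = 0
    have hD : ∀ i : Fin 4, i ≠ 0 → Λ 0 i 0 = 0 := by
      intro i hi
      have h := h2 i (hmem i hi) 0
      rw [if_neg (Ne.symm hi)] at h
      linear_combination h + hA 0 i
    -- Λ i 0 0 = 0
    have hE : ∀ i : Fin 4, i ≠ 0 → Λ i 0 0 = 0 := by
      intro i hi
      have h := e30 i 0 hi
      have hz : (c:ℂ)^2 * Λ i 0 0 = 0 := by linear_combination h + hD i hi
      exact (mul_eq_zero.mp hz).resolve_left hc2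
    -- Λ i 0 j = 0 for distinct nonzero i j
    have hF : ∀ i j : Fin 4, i ≠ 0 → j ≠ 0 → i ≠ j → Λ i 0 j = 0 := by
      intro i j hi hj hij
      have e1 := e30 i j hi
      have e2 := e30 j i hj
      have e3' := h1 0 i (hmem i hi) j (hmem j hj)
      have e4 := h2 j (hmem j hj) i
      rw [if_neg hij] at e4
      have e5 := h2 i (hmem i hi) j
      rw [if_neg (Ne.symm hij)] at e5
      have e6 := e3 i j 0 hi hj
      have key : 2 * (c:ℂ)^2 * Λ i 0 j = 0 := by
        linear_combination e1 - e2 + e3' - (c:ℂ)^2 * (e4 + e5 + e6)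
      have h2c : (2 : ℂ) * (c:ℂ)^2 ≠ 0 := by simp [hc2]
      exact (mul_eq_zero.mp key).resolve_left h2c
    -- Λ 0 i j = 0 for distinct nonzero i j
    have hG : ∀ i j : Fin 4, i ≠ 0 → j ≠ 0 → i ≠ j → Λ 0 i j = 0 := by
      intro i j hi hj hij
      have e1 := e30 i j hi
      linear_combination -e1 + (c:ℂ)^2 * hF i j hi hj hij
    -- Λ j i i = 0 for distinct nonzero i j
    have hH : ∀ i j : Fin 4, i ≠ 0 → j ≠ 0 → i ≠ j → Λ j i i = 0 := by
      intro i j hi hj hij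
      have f1 := e3 j i i hj hi
      have f2 := h1 i j (hmem j hj) i (hmem i hi)
      linear_combination -f1 - f2 - hA i j
    -- Λ j i j = 0 for distinct nonzero i j
    have hI : ∀ i j : Fin 4, i ≠ 0 → j ≠ 0 → i ≠ j → Λ j i j = 0 := by
      intro i j hi hj hij
      have f1 := h1 j i (hmem i hi) j (hmem j hj)
      linear_combination f1 + hA j i
    -- Λ k i j = 0 for pairwise distinct nonzero i j k
    have hJ : ∀ i j k : Fin 4, i ≠ 0 → j ≠ 0 → k ≠ 0 → i ≠ j → j ≠ k → i ≠ k →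
        Λ k i j = 0 := by
      intro i j k hi hj hk hij hjk hik
      have f1 := e3 k i j hk hi
      have f2 := h1 i k (hmem k hk) j (hmem j hj)
      have f3 := e3 i j k hi hj
      have f4 := h1 j i (hmem i hi) k (hmem k hk)
      have f5 := e3 j k i hj hk
      have f6 := h1 k j (hmem j hj) i (hmem i hi)
      have key : 2 * Λ k i j = 0 := by
        linear_combination -f1 - f2 + f3 + f4 - f5 - f6
      linear_combination key / 2
    -- Λ k i 0 = 0 for distinct nonzero i k
    have hK : ∀ i k : Fin 4, i ≠ 0 → k ≠ 0 → k ≠ i → Λ k i 0 = 0 := by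
      intro i k hi hk hki
      have e := h2 i (hmem i hi) k
      rw [if_neg hki] at e
      linear_combination e + hF k i hk hi hki
    funext s a b
    fin_cases s <;> fin_cases a <;> fin_cases b <;>
      simp (config := { decide := true }) [lamSol] <;>
      first
      | exact hA _ _
      | exact hB _ (by decide)
      | exact hC _ (by decide)
      | exact hD _ (by decide)
      | exact hE _ (by decide)
      | exact hF _ _ (by decide) (by decide) (by decide)
      | exact hG _ _ (by decide) (by decide) (by decide)
      | exact hH _ _ (by decide) (by decide) (by decide)
      | exact hI _ _ (by decide) (by decide) (by decide)
      | exact hJ _ _ _ (by decide) (by decide) (by decide) (by decide) (by decide) (by decide)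
      | exact hK _ _ (by decide) (by decide) (by decide)
end

section
/- The plane wave ψ(t,x) = exp(i(ωt + α₁x₁ + α₂x₂ + α₃x₃)) satisfies the deformed Klein–Gordon equation (1/c²)∂²ψ/∂t² + λΣ_{i=1}^{3}∂³ψ/∂t∂x_i² − Σ_{i=1}^{3}∂²ψ/∂x_i² = −(m²c²/ħ²)ψ at every point of ℝ × ℝ³ if and only if the dispersion relation ω² − m²c⁴/ħ² = c²|α|²(1 − iλω) holds. -/
open Complex

/-- The plane wave `ψ(t,x) = exp(i(ωt + α₁x₁ + α₂x₂ + α₃x₃))`. -/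
noncomputable def planeWave (ω : ℝ) (α : Fin 3 → ℝ) (t : ℝ) (x : Fin 3 → ℝ) : ℂ :=
  Complex.exp (Complex.I * ((ω : ℂ) * (t : ℂ) + ∑ i, (α i : ℂ) * (x i : ℂ)))

lemma hasDerivAt_exp_lin (A B : ℂ) (t : ℝ) :
    HasDerivAt (fun s : ℝ => Complex.exp (A * s + B)) (A * Complex.exp (A * t + B)) t := by
  have h1 : HasDerivAt (fun s : ℝ => (s : ℂ)) 1 t := by
    exact Complex.ofRealCLM.hasDerivAt (x := t)
  have h2 := (h1.const_mul A).add_const B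
  simpa [mul_comm] using h2.cexp

lemma deriv_exp_lin (A B : ℂ) :
    deriv (fun s : ℝ => Complex.exp (A * s + B)) = fun t : ℝ => A * Complex.exp (A * t + B) :=
  funext fun t => (hasDerivAt_exp_lin A B t).deriv

lemma iteratedDeriv_two_exp_lin (A B : ℂ) (t : ℝ) :
    iteratedDeriv 2 (fun s : ℝ => Complex.exp (A * s + B)) t
      = A ^ 2 * Complex.exp (A * t + B) := by
  rw [show (2:ℕ) = 1+1 from rfl, iteratedDeriv_succ, iteratedDeriv_one, deriv_exp_lin]
  have h := (hasDerivAt_exp_lin A B t).const_mul A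
  rw [h.deriv]; ring

theorem planeWave_deformed_KG_iff_dispersion
    (c hbar m : ℝ) (hc : 0 < c) (hbar_pos : 0 < hbar) (hm : 0 ≤ m) (lam : ℂ)
    (ω : ℝ) (α : Fin 3 → ℝ) :
    (∀ (t : ℝ) (x : Fin 3 → ℝ),
      (1 / (c : ℂ)^2) * iteratedDeriv 2 (fun s => planeWave ω α s x) t
        + lam * ∑ i : Fin 3,
            deriv (fun s =>
              iteratedDeriv 2 (fun h => planeWave ω α s (Function.update x i h)) (x i)) t
        - ∑ i : Fin 3,
            iteratedDeriv 2 (fun h => planeWave ω α t (Function.update x i h)) (x i)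
      = -((m : ℂ)^2 * (c : ℂ)^2 / (hbar : ℂ)^2) * planeWave ω α t x)
    ↔ ((ω : ℂ)^2 - (m : ℂ)^2 * (c : ℂ)^4 / (hbar : ℂ)^2
        = (c : ℂ)^2 * ((∑ i : Fin 3, (α i : ℂ)^2)) * (1 - Complex.I * lam * (ω : ℂ))) := by
  have hc' : (c : ℂ) ≠ 0 := by exact_mod_cast hc.ne'
  have hh' : (hbar : ℂ) ≠ 0 := by exact_mod_cast hbar_pos.ne'
  -- rewrite time slice as exp-linear
  have ht : ∀ (x : Fin 3 → ℝ),
      (fun s : ℝ => planeWave ω α s x)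
        = fun s : ℝ => Complex.exp ((I * ω) * s + I * ∑ i, (α i : ℂ) * (x i)) := by
    intro x; funext s; simp only [planeWave]; congr 1; ring
  have hT : ∀ (t : ℝ) (x : Fin 3 → ℝ),
      iteratedDeriv 2 (fun s => planeWave ω α s x) t
        = (I * ω) ^ 2 * planeWave ω α t x := by
    intro t x
    rw [ht x, iteratedDeriv_two_exp_lin]
    simp only [planeWave]; congr 2; ring
  -- spatial slice
  have hx : ∀ (i : Fin 3) (t : ℝ) (x : Fin 3 → ℝ),
      (fun h : ℝ => planeWave ω α t (Function.update x i h))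
        = fun h : ℝ => Complex.exp ((I * α i) * h
            + (I * ω * t + I * ∑ j ∈ Finset.univ.erase i, (α j : ℂ) * (x j))) := by
    intro i t x; funext h; simp only [planeWave]; congr 1
    rw [← Finset.add_sum_erase _ (fun j => (α j : ℂ) * ((Function.update x i h j : ℝ) : ℂ))
        (Finset.mem_univ i), Function.update_self,
      Finset.sum_congr rfl (fun j hj => by
        rw [Function.update_of_ne (Finset.ne_of_mem_erase hj)])]
    ring
  have hX : ∀ (i : Fin 3) (t : ℝ) (x : Fin 3 → ℝ),
      iteratedDeriv 2 (fun h => planeWave ω α t (Function.update x i h)) (x i)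
        = (I * α i) ^ 2 * planeWave ω α t x := by
    intro i t x
    rw [hx i t x, iteratedDeriv_two_exp_lin]
    simp only [planeWave]; congr 2
    rw [← Finset.add_sum_erase _ (fun j => (α j : ℂ) * ((x j : ℝ) : ℂ)) (Finset.mem_univ i)]
    ring
  -- mixed derivative
  have hM : ∀ (i : Fin 3) (t : ℝ) (x : Fin 3 → ℝ),
      deriv (fun s =>
          iteratedDeriv 2 (fun h => planeWave ω α s (Function.update x i h)) (x i)) t
        = (I * α i) ^ 2 * (I * ω) * planeWave ω α t x := by
    intro i t x
    have hfun : (fun s : ℝ =>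
        iteratedDeriv 2 (fun h => planeWave ω α s (Function.update x i h)) (x i))
        = fun s : ℝ => (I * α i) ^ 2
            * Complex.exp ((I * ω) * s + I * ∑ j, (α j : ℂ) * (x j)) := by
      funext s
      rw [hX i s x, congrFun (ht x) s]
    rw [hfun, ((hasDerivAt_exp_lin (I * ω) (I * ∑ j, (α j : ℂ) * (x j)) t).const_mul
        ((I * α i) ^ 2)).deriv, congrFun (ht x) t]
    ring
  -- the whole equation is K * ψ = K' * ψ
  have key : ∀ (t : ℝ) (x : Fin 3 → ℝ),
      (1 / (c : ℂ)^2) * iteratedDeriv 2 (fun s => planeWave ω α s x) t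
        + lam * ∑ i : Fin 3,
            deriv (fun s =>
              iteratedDeriv 2 (fun h => planeWave ω α s (Function.update x i h)) (x i)) t
        - ∑ i : Fin 3,
            iteratedDeriv 2 (fun h => planeWave ω α t (Function.update x i h)) (x i)
      = (-(ω : ℂ)^2 / (c : ℂ)^2
          - I * lam * ω * (∑ i : Fin 3, (α i : ℂ) ^ 2)
          + ∑ i : Fin 3, (α i : ℂ) ^ 2) * planeWave ω α t x := by
    intro t x
    simp only [hM]
    simp only [hX, hT, ← Finset.sum_mul]
    simp only [mul_pow, I_sq, neg_one_mul, one_mul, neg_mul, Finset.sum_neg_distrib]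
    ring
  constructor
  · intro h
    have h0 := h 0 0
    rw [key] at h0
    have hne : planeWave ω α 0 0 ≠ 0 := Complex.exp_ne_zero _
    have h1 := mul_right_cancel₀ hne h0
    field_simp at h1 ⊢
    linear_combination -h1
  · intro h t x
    rw [key]
    congr 1
    field_simp at h ⊢
    linear_combination -h
end

section
/- Let ω, μ, b, K be real numbers with b ≥ 0, K ≥ 0 and b·|μ| < 1. If ω² − b² = K(1 + μω), then |ω| ≥ b. -/
theorem dispersion_omega_lower_bound (ω μ b K : ℝ)
    (hb : 0 ≤ b) (hK : 0 ≤ K) (hsmall : b * |μ| < 1)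
    (hdisp : ω^2 - b^2 = K * (1 + μ * ω)) :
    b ≤ |ω| := by
  by_contra h
  push_neg at h
  have h1 : |μ * ω| < 1 := by
    rw [abs_mul]
    calc |μ| * |ω| ≤ |μ| * b := by nlinarith [abs_nonneg μ, abs_nonneg ω]
    _ < 1 := by linarith [mul_comm b |μ|]
  have h2 : 0 < 1 + μ * ω := by
    have := neg_abs_le (μ * ω)
    linarith
  have h3 : ω^2 < b^2 := by nlinarith [abs_nonneg ω, sq_abs ω]
  nlinarith [mul_nonneg hK h2.le]
end

section
/- Let a be a real number and f(x) = x/(1 + ax). Then (f(m) + f(n) − f(m+n))/(m·n) tends to 2a as (m,n) → (0,0) with m ≠ 0 and n ≠ 0. That is, to lowest order in the masses, m' + n' − (m+n)' = 2amn, which with a = iλc²/ħ is the paper's binding-energy term 2iλmnc²/ħ. -/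
open Filter

theorem effective_mass_defect_lowest_order (a : ℝ) :
    Tendsto
      (fun p : ℝ × ℝ =>
        (p.1 / (1 + a * p.1) + p.2 / (1 + a * p.2)
            - (p.1 + p.2) / (1 + a * (p.1 + p.2))) / (p.1 * p.2))
      (nhdsWithin (0, 0) {p : ℝ × ℝ | p.1 ≠ 0 ∧ p.2 ≠ 0})
      (nhds (2 * a)) := by
  have hg : Tendsto
      (fun p : ℝ × ℝ =>
        (2 * a + a ^ 2 * (p.1 + p.2)) /
          ((1 + a * p.1) * ((1 + a * p.2) * (1 + a * (p.1 + p.2)))))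
      (nhds ((0, 0) : ℝ × ℝ)) (nhds (2 * a)) := by
    have : ContinuousAt
        (fun p : ℝ × ℝ =>
          (2 * a + a ^ 2 * (p.1 + p.2)) /
            ((1 + a * p.1) * ((1 + a * p.2) * (1 + a * (p.1 + p.2)))))
        ((0, 0) : ℝ × ℝ) := by
      apply ContinuousAt.div
      · fun_prop
      · fun_prop
      · norm_num
    simpa using this.tendsto
  have hne : ∀ᶠ p : ℝ × ℝ in nhds ((0, 0) : ℝ × ℝ),
      (1 + a * p.1) ≠ 0 ∧ (1 + a * p.2) ≠ 0 ∧ (1 + a * (p.1 + p.2)) ≠ 0 := by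
    have h1 : ContinuousAt (fun p : ℝ × ℝ => 1 + a * p.1) (0, 0) := by fun_prop
    have h2 : ContinuousAt (fun p : ℝ × ℝ => 1 + a * p.2) (0, 0) := by fun_prop
    have h3 : ContinuousAt (fun p : ℝ × ℝ => 1 + a * (p.1 + p.2)) (0, 0) := by fun_prop
    have e1 : ∀ᶠ p : ℝ × ℝ in nhds ((0, 0) : ℝ × ℝ), (1 + a * p.1) ≠ 0 :=
      h1.eventually_ne (by norm_num)
    have e2 : ∀ᶠ p : ℝ × ℝ in nhds ((0, 0) : ℝ × ℝ), (1 + a * p.2) ≠ 0 :=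
      h2.eventually_ne (by norm_num)
    have e3 : ∀ᶠ p : ℝ × ℝ in nhds ((0, 0) : ℝ × ℝ), (1 + a * (p.1 + p.2)) ≠ 0 :=
      h3.eventually_ne (by norm_num)
    filter_upwards [e1, e2, e3] with p hp1 hp2 hp3
    exact ⟨hp1, hp2, hp3⟩
  refine Tendsto.congr' ?_ (hg.mono_left nhdsWithin_le_nhds)
  filter_upwards [nhdsWithin_le_nhds hne, self_mem_nhdsWithin] with p hp hmem
  obtain ⟨h1, h2, h3⟩ := hp
  obtain ⟨hm, hn⟩ := hmem
  field_simp
  ring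
end
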